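/- Let g ≠ 0, κ, γ > 0, d ∈ (−1,1) with C_b = g² d/(κγ) > 1, set r₀ = γ√(C_b − 1)/(√2 |g|), and let J be the real 4×4 matrix J = [[−κ, g, 0, 0], [κγ/g, −γ, 0, g r₀], [0, 0, −γ − κ, 0], [−4κ r₀, −4g r₀, 0, −2γ]]. Then the characteristic polynomial of J factors as det(J − λ I) = (λ + γ + κ) · ( λ³ + (3γ + κ)λ² + (2γ²C_b + 2γκ)λ + 8 g² κ r₀² ), where 8 g² κ r₀² = 4κγ²(C_b − 1). -/

import Mathlib

open Matrix

lemma detFour (A : Matrix (Fin 4) (Fin 4) ℝ) :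
    A.det =
      A 0 0 * (A 1 1 * A 2 2 * A 3 3 - A 1 1 * A 2 3 * A 3 2 - A 1 2 * A 2 1 * A 3 3
        + A 1 2 * A 2 3 * A 3 1 + A 1 3 * A 2 1 * A 3 2 - A 1 3 * A 2 2 * A 3 1)
      - A 0 1 * (A 1 0 * A 2 2 * A 3 3 - A 1 0 * A 2 3 * A 3 2 - A 1 2 * A 2 0 * A 3 3
        + A 1 2 * A 2 3 * A 3 0 + A 1 3 * A 2 0 * A 3 2 - A 1 3 * A 2 2 * A 3 0)
      + A 0 2 * (A 1 0 * A 2 1 * A 3 3 - A 1 0 * A 2 3 * A 3 1 - A 1 1 * A 2 0 * A 3 3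
        + A 1 1 * A 2 3 * A 3 0 + A 1 3 * A 2 0 * A 3 1 - A 1 3 * A 2 1 * A 3 0)
      - A 0 3 * (A 1 0 * A 2 1 * A 3 2 - A 1 0 * A 2 2 * A 3 1 - A 1 1 * A 2 0 * A 3 2
        + A 1 1 * A 2 2 * A 3 0 + A 1 2 * A 2 0 * A 3 1 - A 1 2 * A 2 1 * A 3 0) := by
  rw [Matrix.det_succ_row_zero]
  simp [Fin.sum_univ_succ, Matrix.det_fin_three, Matrix.submatrix_apply, Fin.succAbove,
    show (Fin.succ 2 : Fin 4) = 3 from rfl, show (Fin.castSucc 2 : Fin 4) = 2 from rfl]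
  ring

set_option maxHeartbeats 1000000 in
/-- **Factorization of the characteristic polynomial of the Jacobian at the nonzero
equilibrium.** With `r₀ = γ√(C_b−1)/(√2|g|)` and `C_b = g²d/(κγ) > 1`,
`det(J − λI) = (λ + γ + κ)(λ³ + (3γ+κ)λ² + (2γ²C_b + 2γκ)λ + 8g²κr₀²)`, where
`8g²κr₀² = 4κγ²(C_b − 1)`. -/
theorem jacobian_characteristic_polynomial_factorization
    (g κ γ d : ℝ) (hg : g ≠ 0) (hκ : 0 < κ) (hγ : 0 < γ)
    (hd : -1 < d ∧ d < 1)
    (hCb : 1 < g ^ 2 * d / (κ * γ))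
    (r₀ : ℝ) (hr₀ : r₀ = γ * Real.sqrt (g ^ 2 * d / (κ * γ) - 1) / (Real.sqrt 2 * |g|))
    (J : Matrix (Fin 4) (Fin 4) ℝ)
    (hJ : J = !![-κ, g, 0, 0;
                 κ * γ / g, -γ, 0, g * r₀;
                 0, 0, -γ - κ, 0;
                 -4 * κ * r₀, -4 * g * r₀, 0, -2 * γ]) :
    (∀ x : ℝ, (J - x • (1 : Matrix (Fin 4) (Fin 4) ℝ)).det =
        (x + γ + κ) *
          (x ^ 3 + (3 * γ + κ) * x ^ 2 + (2 * γ ^ 2 * (g ^ 2 * d / (κ * γ)) + 2 * γ * κ) * x +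
            8 * g ^ 2 * κ * r₀ ^ 2)) ∧
    8 * g ^ 2 * κ * r₀ ^ 2 = 4 * κ * γ ^ 2 * (g ^ 2 * d / (κ * γ) - 1) := by
  have hr2 : r₀ ^ 2 = γ ^ 2 * (g ^ 2 * d / (κ * γ) - 1) / (2 * g ^ 2) := by
    have h1 : (0:ℝ) ≤ g ^ 2 * d / (κ * γ) - 1 := by linarith
    rw [hr₀]
    rw [div_pow, mul_pow, mul_pow, Real.sq_sqrt h1, Real.sq_sqrt (by norm_num : (0:ℝ) ≤ 2),
      sq_abs]
  have h8 : 8 * g ^ 2 * κ * r₀ ^ 2 = 4 * κ * γ ^ 2 * (g ^ 2 * d / (κ * γ) - 1) := by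
    rw [hr2]; field_simp; ring
  refine ⟨fun x => ?_, h8⟩
  subst hJ
  have hM : (!![-κ, g, 0, 0;
                 κ * γ / g, -γ, 0, g * r₀;
                 0, 0, -γ - κ, 0;
                 -4 * κ * r₀, -4 * g * r₀, 0, -2 * γ] - x • (1 : Matrix (Fin 4) (Fin 4) ℝ))
      = !![-κ - x, g, 0, 0;
           κ * γ / g, -γ - x, 0, g * r₀;
           0, 0, -γ - κ - x, 0;
           -4 * κ * r₀, -4 * g * r₀, 0, -2 * γ - x] := by
    ext i j
    fin_cases i <;> fin_cases j <;>
      simp [Matrix.one_apply, Matrix.sub_apply, Matrix.smul_apply]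
  rw [hM, detFour]
  simp only [Matrix.of_apply, Matrix.cons_val', Matrix.cons_val_zero, Matrix.cons_val_one, Matrix.head_cons, Matrix.cons_val_two, Matrix.cons_val_three, Matrix.tail_cons, Matrix.head_fin_const, Matrix.empty_val']
  norm_num [Matrix.cons_val_zero, Matrix.cons_val_one, Matrix.head_cons]
  rw [hr2]
  field_simp
  ring_nf
  rw [hr2]
  field_simp
  ring
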